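/- Let μ, σ > 0, γ ∈ (0,1) with μ/(γσ²) < 1, 0 < λ < μ with μ + λ < γσ², and ε ∈ (0,1). Set a = sqrt(|(γ−1)(μ²−λ²)/(γσ⁴) − (1/2 − μ/σ²)²|), b = 1/2 − μ/σ² + (γ−1)(μ−λ)/(γσ²), assume (γ−1)(μ²−λ²)/(γσ⁴) − (1/2 − μ/σ²)² < 0 and |b| < a, and let w(y) = (a·tanh(artanh(b/a) − a·y) + (μ/σ² − 1/2))/(γ−1). Set l = (μ−λ)/(γσ² − (μ−λ)), u = (1/(1−ε))·(μ+λ)/(γσ² − (μ+λ)), L = log(u/l), assume L > 0, and suppose w(L) = (μ+λ)/(γσ²). Then ∫₀^L w(y) dy = ((μ/σ² − 1/2)/(γ−1))·log( (1/(1−ε))·((μ+λ)(μ−λ−γσ²))/((μ−λ)(μ+λ−γσ²)) ) + (1/(2(γ−1)))·log( ((μ+λ)(μ+λ−γσ²))/((μ−λ)(μ−λ−γσ²)) ). -/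

import Mathlib

/-- Inverse hyperbolic tangent, defined on (−1, 1). -/
noncomputable def artanh (x : ℝ) : ℝ := (1 / 2) * Real.log ((1 + x) / (1 - x))

lemma tanh_artanh {x : ℝ} (h : |x| < 1) : Real.tanh (artanh x) = x := by
  have hx1 : 0 < 1 - x := by have := abs_lt.mp h; linarith [this.2]
  have hx2 : 0 < 1 + x := by have := abs_lt.mp h; linarith [this.1]
  have htpos : 0 < (1 + x) / (1 - x) := div_pos hx2 hx1
  have hE : Real.exp (artanh x) ^ 2 = (1 + x) / (1 - x) := by
    rw [sq, ← Real.exp_add,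
      show artanh x + artanh x = Real.log ((1 + x) / (1 - x)) by unfold artanh; ring]
    exact Real.exp_log htpos
  have hEpos := Real.exp_pos (artanh x)
  have hE' : Real.exp (artanh x) ^ 2 * (1 - x) = 1 + x := by
    rw [hE]; field_simp
  rw [Real.tanh_eq_sinh_div_cosh, Real.sinh_eq, Real.cosh_eq, Real.exp_neg]
  have hden : Real.exp (artanh x) + (Real.exp (artanh x))⁻¹ ≠ 0 := by positivity
  field_simp
  nlinarith [hE', hEpos]

lemma log_cosh_eq (x : ℝ) :
    Real.log (Real.cosh x) = -(1 / 2) * Real.log (1 - Real.tanh x ^ 2) := by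
  have hc := Real.cosh_pos x
  have h1 : 1 - Real.tanh x ^ 2 = (Real.cosh x ^ 2)⁻¹ := by
    rw [Real.tanh_eq_sinh_div_cosh, div_pow]
    field_simp
    linarith [Real.cosh_sq x]
  rw [h1, Real.log_inv, Real.log_pow]
  push_cast
  ring

set_option maxHeartbeats 1000000

/-- closed-form value of the integral `∫₀^L w(y) dy` of the
explicit (hyperbolic-tangent case) solution of the Riccati ODE over the
no-trade region. -/
theorem integral_of_w_closed_form (μ σ γ lam ε : ℝ)
    (hμ : 0 < μ) (hσ : 0 < σ) (hγ0 : 0 < γ) (hγ1 : γ < 1)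
    (hmerton : μ / (γ * σ ^ 2) < 1)
    (hlam0 : 0 < lam) (hlamμ : lam < μ) (hlev : μ + lam < γ * σ ^ 2)
    (hε : ε ∈ Set.Ioo (0 : ℝ) 1)
    (a b : ℝ)
    (ha : a = Real.sqrt |(γ - 1) * (μ ^ 2 - lam ^ 2) / (γ * σ ^ 4) - (1 / 2 - μ / σ ^ 2) ^ 2|)
    (hb : b = 1 / 2 - μ / σ ^ 2 + (γ - 1) * (μ - lam) / (γ * σ ^ 2))
    (hD : (γ - 1) * (μ ^ 2 - lam ^ 2) / (γ * σ ^ 4) - (1 / 2 - μ / σ ^ 2) ^ 2 < 0)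
    (hba : |b| < a)
    (w : ℝ → ℝ)
    (hw : w = fun y => (a * Real.tanh (artanh (b / a) - a * y) + (μ / σ ^ 2 - 1 / 2)) / (γ - 1))
    (l u L : ℝ)
    (hl : l = (μ - lam) / (γ * σ ^ 2 - (μ - lam)))
    (hu : u = (1 / (1 - ε)) * ((μ + lam) / (γ * σ ^ 2 - (μ + lam))))
    (hL : L = Real.log (u / l)) (hLpos : 0 < L)
    (hwL : w L = (μ + lam) / (γ * σ ^ 2)) :
    ∫ y in (0 : ℝ)..L, w y =
      ((μ / σ ^ 2 - 1 / 2) / (γ - 1)) *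
        Real.log ((1 / (1 - ε)) *
          ((μ + lam) * (μ - lam - γ * σ ^ 2)) / ((μ - lam) * (μ + lam - γ * σ ^ 2)))
      + (1 / (2 * (γ - 1))) *
        Real.log (((μ + lam) * (μ + lam - γ * σ ^ 2)) / ((μ - lam) * (μ - lam - γ * σ ^ 2))) := by
  have hσ2 : 0 < σ ^ 2 := by positivity
  have hA : 0 < γ * σ ^ 2 := by positivity
  have hp : 0 < μ - lam := by linarith
  have hq : 0 < μ + lam := by linarith
  have hpA : μ - lam < γ * σ ^ 2 := by linarith
  have hγ1' : γ - 1 < 0 := by linarith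
  have hγ1ne : γ - 1 ≠ 0 := ne_of_lt hγ1'
  have hγne : γ ≠ 0 := ne_of_gt hγ0
  have hσne : σ ≠ 0 := ne_of_gt hσ
  have hε1 : (0:ℝ) < 1 - ε := by linarith [hε.2]
  -- facts about a
  have habs : |(γ - 1) * (μ ^ 2 - lam ^ 2) / (γ * σ ^ 4) - (1 / 2 - μ / σ ^ 2) ^ 2| =
      -((γ - 1) * (μ ^ 2 - lam ^ 2) / (γ * σ ^ 4) - (1 / 2 - μ / σ ^ 2) ^ 2) := abs_of_neg hD
  have hapos : 0 < a := by
    rw [ha, habs]; exact Real.sqrt_pos.mpr (by linarith)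
  have ha2 : a ^ 2 = -((γ - 1) * (μ ^ 2 - lam ^ 2) / (γ * σ ^ 4) - (1 / 2 - μ / σ ^ 2) ^ 2) := by
    rw [ha, habs, Real.sq_sqrt (by linarith)]
  set b' : ℝ := 1 / 2 - μ / σ ^ 2 + (γ - 1) * (μ + lam) / (γ * σ ^ 2) with hb'
  have fact1 : a ^ 2 - b ^ 2 =
      (1 - γ) * (μ - lam) * (γ * σ ^ 2 - (μ - lam)) / (γ * σ ^ 2) ^ 2 := by
    rw [ha2, hb]; field_simp; ring
  have fact2 : a ^ 2 - b' ^ 2 =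
      (1 - γ) * (μ + lam) * (γ * σ ^ 2 - (μ + lam)) / (γ * σ ^ 2) ^ 2 := by
    rw [ha2, hb']; field_simp; ring
  have fact1pos : 0 < a ^ 2 - b ^ 2 := by
    rw [fact1]
    have h1 : 0 < (1 - γ) * (μ - lam) * (γ * σ ^ 2 - (μ - lam)) := by
      apply mul_pos (mul_pos (by linarith) hp) (by linarith)
    exact div_pos h1 (by positivity)
  have fact2pos : 0 < a ^ 2 - b' ^ 2 := by
    rw [fact2]
    have h1 : 0 < (1 - γ) * (μ + lam) * (γ * σ ^ 2 - (μ + lam)) := by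
      apply mul_pos (mul_pos (by linarith) hq) (by linarith)
    exact div_pos h1 (by positivity)
  -- tanh at 0
  have hba' : |b / a| < 1 := by
    rw [abs_div, abs_of_pos hapos]; exact (div_lt_one hapos).mpr hba
  have htanh0 : Real.tanh (artanh (b / a)) = b / a := tanh_artanh hba'
  -- tanh at L
  have hwLeq : a * Real.tanh (artanh (b / a) - a * L) + (μ / σ ^ 2 - 1 / 2) =
      (μ + lam) / (γ * σ ^ 2) * (γ - 1) := by
    have h := hwL
    rw [hw] at h
    simp only at h
    rw [div_eq_iff hγ1ne] at h
    exact h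
  have htanhL : Real.tanh (artanh (b / a) - a * L) = b' / a := by
    rw [eq_div_iff (ne_of_gt hapos), hb']
    linear_combination hwLeq
  -- the antiderivative
  have hderiv : ∀ y : ℝ, HasDerivAt
      (fun y => (-(Real.log (Real.cosh (artanh (b / a) - a * y))) + (μ / σ ^ 2 - 1 / 2) * y) / (γ - 1))
      (w y) y := by
    intro y
    have h1 : HasDerivAt (fun y : ℝ => artanh (b / a) - a * y) (-a) y := by
      have h := ((hasDerivAt_id' y).const_mul a).const_sub (artanh (b / a))
      simp only [mul_one] at h
      exact h
    have h2 := h1.cosh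
    have h3 := h2.log (Real.cosh_pos _).ne'
    have h4 := ((h3.neg).add ((hasDerivAt_id y).const_mul (μ / σ ^ 2 - 1 / 2))).div_const (γ - 1)
    refine h4.congr_deriv ?_
    rw [hw]
    simp only [id_eq, mul_one]
    rw [Real.tanh_eq_sinh_div_cosh]
    have hc := (Real.cosh_pos (artanh (b / a) - a * y)).ne'
    field_simp
  have hwcont : Continuous w := by
    rw [hw]
    have hlin : Continuous fun y : ℝ => artanh (b / a) - a * y := continuous_const.sub (continuous_const.mul continuous_id)
    have htc : Continuous fun y : ℝ => Real.tanh (artanh (b / a) - a * y) := by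
      simp only [Real.tanh_eq_sinh_div_cosh]
      exact (Real.continuous_sinh.comp hlin).div (Real.continuous_cosh.comp hlin)
        fun y => (Real.cosh_pos _).ne'
    exact ((continuous_const.mul htc).add continuous_const).div_const _
  have key : ∫ y in (0:ℝ)..L, w y =
      (-(Real.log (Real.cosh (artanh (b / a) - a * L))) + (μ / σ ^ 2 - 1 / 2) * L) / (γ - 1) -
      (-(Real.log (Real.cosh (artanh (b / a) - a * 0))) + (μ / σ ^ 2 - 1 / 2) * 0) / (γ - 1) :=
    intervalIntegral.integral_eq_sub_of_hasDerivAt (fun y _ => hderiv y)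
      (hwcont.intervalIntegrable 0 L)
  -- rewrite logs of cosh via tanh
  have hlc0 : Real.log (Real.cosh (artanh (b / a) - a * 0)) =
      -(1 / 2) * Real.log ((a ^ 2 - b ^ 2) / a ^ 2) := by
    rw [log_cosh_eq, show artanh (b / a) - a * 0 = artanh (b / a) by ring, htanh0]
    congr 1
    field_simp
  have hlcL : Real.log (Real.cosh (artanh (b / a) - a * L)) =
      -(1 / 2) * Real.log ((a ^ 2 - b' ^ 2) / a ^ 2) := by
    rw [log_cosh_eq, htanhL]
    congr 1
    field_simp
  -- the two log identities
  have hApne : γ * σ ^ 2 - (μ - lam) ≠ 0 := by linarith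
  have hAqne : γ * σ ^ 2 - (μ + lam) ≠ 0 := by linarith
  have hpAne : μ - lam - γ * σ ^ 2 ≠ 0 := by linarith
  have hqAne : μ + lam - γ * σ ^ 2 ≠ 0 := by linarith
  have hratio : (a ^ 2 - b' ^ 2) / (a ^ 2 - b ^ 2) =
      ((μ + lam) * (μ + lam - γ * σ ^ 2)) / ((μ - lam) * (μ - lam - γ * σ ^ 2)) := by
    have hden1 : (μ - lam) * (μ - lam - γ * σ ^ 2) < 0 :=
      mul_neg_of_pos_of_neg hp (by linarith)
    rw [div_eq_div_iff (ne_of_gt fact1pos) (ne_of_lt hden1), fact1, fact2]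
    field_simp
    ring
  have hlogratio : Real.log ((a ^ 2 - b' ^ 2) / a ^ 2) - Real.log ((a ^ 2 - b ^ 2) / a ^ 2) =
      Real.log (((μ + lam) * (μ + lam - γ * σ ^ 2)) / ((μ - lam) * (μ - lam - γ * σ ^ 2))) := by
    rw [← hratio]
    rw [Real.log_div (ne_of_gt fact2pos) (by positivity),
      Real.log_div (ne_of_gt fact1pos) (by positivity),
      Real.log_div (ne_of_gt fact2pos) (ne_of_gt fact1pos)]
    ring
  have hul : u / l = 1 / (1 - ε) *
      ((μ + lam) * (μ - lam - γ * σ ^ 2)) / ((μ - lam) * (μ + lam - γ * σ ^ 2)) := by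
    rw [hl, hu]
    field_simp
    ring
  rw [key, hlc0, hlcL, hL, hul, ← hlogratio]
  field_simp
  ring
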